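/- Let i, j, r be integers with i ≥ 2, j ≥ i + 2 and r ≥ 2. Then the following identity holds in ℚ(t): P_j·P_{j+r−2}/(P_i·P_{j−i}·P_r·P_{j−2}) = P_{r+i−2}·P_{r+j}/(P_r·P_{i−2}·P_{r+i}·P_{j−i}) + t^{2(i−1)}·P_2·P_{r+i−2}·P_{r+j−1}/(P_{r−1}·P_{i−1}·P_{r+i}·P_{j−i−1}) + t^{4i}·P_2·P_{r+i−2}·P_{r+j−2}/(P_2·P_{r−2}·P_i·P_{r+i}·P_{j−i−2}). -/
import Mathlib


open Polynomial

/-- `hpoly α = 1 + t^2 + ⋯ + t^{2α}` for `α ≥ 0`. -/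
noncomputable def hpoly (α : ℤ) : Polynomial ℚ :=
  ∑ m ∈ Finset.range (α.toNat + 1), X ^ (2 * m)

/-- `Ppoly 0 = 1` and `Ppoly α = hpoly 0 ⋯ hpoly (α-1)` for `α > 0`. -/
noncomputable def Ppoly (α : ℤ) : Polynomial ℚ :=
  ∏ m ∈ Finset.range α.toNat, hpoly (m : ℤ)

/-- The image of `hpoly α` in the field of rational functions `ℚ(t)`. -/
noncomputable def hQ (α : ℤ) : RatFunc ℚ :=
  algebraMap (Polynomial ℚ) (RatFunc ℚ) (hpoly α)

/-- The image of `Ppoly α` in the field of rational functions `ℚ(t)`. -/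
noncomputable def PQ (α : ℤ) : RatFunc ℚ :=
  algebraMap (Polynomial ℚ) (RatFunc ℚ) (Ppoly α)

/-- The variable `t` of `ℚ(t)`. -/
noncomputable def tQ : RatFunc ℚ := RatFunc.X

lemma hpoly_mul (n : ℕ) : hpoly (n : ℤ) * (X ^ 2 - 1) = X ^ (2 * n + 2) - 1 := by
  have h1 : hpoly (n : ℤ) = ∑ m ∈ Finset.range (n + 1), ((X : ℚ[X]) ^ 2) ^ m := by
    simp [hpoly, ← pow_mul]
  rw [h1, geom_sum_mul, ← pow_mul]
  ring_nf

lemma X_pow_sub_one_ne (n : ℕ) (hn : 0 < n) : (X : ℚ[X]) ^ n - 1 ≠ 0 := by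
  simpa using Polynomial.X_pow_sub_C_ne_zero hn (1 : ℚ)

lemma hpoly_ne_zero (α : ℤ) : hpoly α ≠ 0 := by
  have h : hpoly α = hpoly ((α.toNat : ℕ) : ℤ) := by
    unfold hpoly
    rw [Int.toNat_natCast]
  rw [h]
  exact left_ne_zero_of_mul (hpoly_mul α.toNat ▸ X_pow_sub_one_ne _ (by omega))

lemma Ppoly_ne_zero (α : ℤ) : Ppoly α ≠ 0 :=
  Finset.prod_ne_zero_iff.mpr fun m _ => hpoly_ne_zero _

lemma PQ_ne_zero (α : ℤ) : PQ α ≠ 0 :=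
  RatFunc.algebraMap_ne_zero (Ppoly_ne_zero α)

lemma tQ_sq_sub_one_ne : tQ ^ 2 - (1 : RatFunc ℚ) ≠ 0 := by
  have h : tQ ^ 2 - (1 : RatFunc ℚ) =
      algebraMap (Polynomial ℚ) (RatFunc ℚ) (X ^ 2 - 1) := by
    simp [tQ, map_sub, map_pow, RatFunc.algebraMap_X]
  rw [h]
  exact RatFunc.algebraMap_ne_zero (X_pow_sub_one_ne 2 (by norm_num))

lemma hQ_eq (n : ℕ) : hQ (n : ℤ) = (tQ ^ (2 * n + 2) - 1) / (tQ ^ 2 - 1) := by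
  rw [eq_div_iff tQ_sq_sub_one_ne]
  have := congrArg (algebraMap (Polynomial ℚ) (RatFunc ℚ)) (hpoly_mul n)
  simpa [hQ, tQ, map_mul, map_sub, map_pow, RatFunc.algebraMap_X] using this

lemma PQ_zero : PQ ((0 : ℕ) : ℤ) = 1 := by simp [PQ, Ppoly]

lemma Pstep1 (n : ℕ) : PQ ((n + 1 : ℕ) : ℤ) = PQ (n : ℤ) * hQ (n : ℤ) := by
  rw [PQ, PQ, hQ, ← map_mul]
  congr 1
  simp [Ppoly, Finset.prod_range_succ]

lemma Pstep2 (n : ℕ) :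
    PQ ((n + 2 : ℕ) : ℤ) = PQ (n : ℤ) * hQ (n : ℤ) * hQ ((n + 1 : ℕ) : ℤ) := by
  rw [show n + 2 = (n + 1) + 1 from rfl, Pstep1, Pstep1]

lemma hQ_mul (n : ℕ) : hQ (n : ℤ) * (tQ ^ 2 - 1) = tQ ^ (2 * n + 2) - 1 := by
  have := congrArg (algebraMap (Polynomial ℚ) (RatFunc ℚ)) (hpoly_mul n)
  simpa [hQ, tQ, map_mul, map_sub, map_pow, RatFunc.algebraMap_X] using this

lemma hQ_zero : hQ ((0 : ℕ) : ℤ) = 1 := by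
  simp [hQ, hpoly]

lemma hsplit (m n : ℕ) :
    hQ ((m + n + 1 : ℕ) : ℤ) = hQ (m : ℤ) + tQ ^ (2 * m + 2) * hQ (n : ℤ) := by
  apply mul_right_cancel₀ tQ_sq_sub_one_ne
  rw [add_mul, mul_assoc, hQ_mul, hQ_mul, hQ_mul]
  ring

lemma hsucc (n : ℕ) : hQ ((n + 1 : ℕ) : ℤ) = tQ ^ 2 * hQ (n : ℤ) + 1 := by
  apply mul_right_cancel₀ tQ_sq_sub_one_ne
  rw [add_mul, mul_assoc, hQ_mul, hQ_mul, one_mul]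
  ring

lemma urel (n : ℕ) : tQ ^ (2 * n + 2) = hQ (n : ℤ) * (tQ ^ 2 - 1) + 1 := by
  rw [hQ_mul]; ring

/-- Identity (5.4) of the Appendix: the global identity in the case
`k = c + 2 = r + i`, `l = j + c`, i.e. `2 = k - c < k - i`. -/
theorem global_identity_case_k_sub_c_eq_two
    (i j r : ℤ) (hi : 2 ≤ i) (hj : j ≥ i + 2) (hr : 2 ≤ r) :
    PQ j * PQ (j + r - 2) / (PQ i * PQ (j - i) * PQ r * PQ (j - 2)) =
      PQ (r + i - 2) * PQ (r + j) /
        (PQ r * PQ (i - 2) * PQ (r + i) * PQ (j - i)) +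
      tQ ^ (2 * (i - 1)).toNat * PQ 2 * PQ (r + i - 2) * PQ (r + j - 1) /
        (PQ (r - 1) * PQ (i - 1) * PQ (r + i) * PQ (j - i - 1)) +
      tQ ^ (4 * i).toNat * PQ 2 * PQ (r + i - 2) * PQ (r + j - 2) /
        (PQ 2 * PQ (r - 2) * PQ i * PQ (r + i) * PQ (j - i - 2)) := by
  obtain ⟨a, rfl⟩ := Int.le.dest hi
  obtain ⟨b, rfl⟩ := Int.le.dest hj
  obtain ⟨c, rfl⟩ := Int.le.dest hr
  have cg : ∀ x y : ℤ, x = y → PQ x = PQ y := fun x y h => h ▸ rfl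
  have hcg : ∀ m n : ℕ, m = n → hQ (m : ℤ) = hQ (n : ℤ) := fun m n h => h ▸ rfl
  rw [cg (2 + (a:ℤ) + 2 + b) ((a+b+2)+2 : ℕ) (by omega),
      cg (2 + (a:ℤ) + 2 + b + (2 + c) - 2) ((a+b+c+4 : ℕ)) (by omega),
      cg (2 + (a:ℤ)) ((a+2 : ℕ)) (by omega),
      cg (2 + (a:ℤ) + 2 + b - (2 + a)) ((b+2 : ℕ)) (by omega),
      cg (2 + (c:ℤ)) ((c+2 : ℕ)) (by omega),
      cg (2 + (a:ℤ) + 2 + b - 2) ((a+b+2 : ℕ)) (by omega),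
      cg (2 + (c:ℤ) + (2 + a) - 2) ((a+c+2 : ℕ)) (by omega),
      cg (2 + (c:ℤ) + (2 + a + 2 + b)) (((a+b+c+4)+2 : ℕ)) (by omega),
      cg (2 + (a:ℤ) - 2) ((a : ℕ)) (by omega),
      cg (2 + (c:ℤ) + (2 + a)) (((a+c+2)+2 : ℕ)) (by omega),
      cg (2 : ℤ) ((0+2 : ℕ)) (by omega),
      cg (2 + (c:ℤ) - 1) ((c+1 : ℕ)) (by omega),
      cg (2 + (a:ℤ) - 1) ((a+1 : ℕ)) (by omega),
      cg (2 + (c:ℤ) + (2 + a + 2 + b) - 1) (((a+b+c+4)+1 : ℕ)) (by omega),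
      cg (2 + (a:ℤ) + 2 + b - (2 + a) - 1) ((b+1 : ℕ)) (by omega),
      cg (2 + (c:ℤ) - 2) ((c : ℕ)) (by omega),
      cg (2 + (c:ℤ) + (2 + a + 2 + b) - 2) ((a+b+c+4 : ℕ)) (by omega),
      cg (2 + (a:ℤ) + 2 + b - (2 + a) - 2) ((b : ℕ)) (by omega)]
  rw [show (2 * (2 + (a:ℤ) - 1)).toNat = 2*a+2 by omega,
      show (4 * (2 + (a:ℤ))).toNat = 4*a+8 by omega]
  -- clear the divisions
  have pn : ∀ n : ℕ, PQ (n : ℤ) ≠ 0 := fun n => PQ_ne_zero _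
  have d1 : PQ ((a+2 : ℕ) : ℤ) * PQ ((b+2 : ℕ) : ℤ) * PQ ((c+2 : ℕ) : ℤ) *
      PQ ((a+b+2 : ℕ) : ℤ) ≠ 0 :=
    mul_ne_zero (mul_ne_zero (mul_ne_zero (pn _) (pn _)) (pn _)) (pn _)
  have d2 : PQ ((c+2 : ℕ) : ℤ) * PQ ((a : ℕ) : ℤ) * PQ (((a+c+2)+2 : ℕ) : ℤ) *
      PQ ((b+2 : ℕ) : ℤ) ≠ 0 :=
    mul_ne_zero (mul_ne_zero (mul_ne_zero (pn _) (pn _)) (pn _)) (pn _)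
  have d3 : PQ ((c+1 : ℕ) : ℤ) * PQ ((a+1 : ℕ) : ℤ) * PQ (((a+c+2)+2 : ℕ) : ℤ) *
      PQ ((b+1 : ℕ) : ℤ) ≠ 0 :=
    mul_ne_zero (mul_ne_zero (mul_ne_zero (pn _) (pn _)) (pn _)) (pn _)
  have d4 : PQ ((0+2 : ℕ) : ℤ) * PQ ((c : ℕ) : ℤ) * PQ ((a+2 : ℕ) : ℤ) *
      PQ (((a+c+2)+2 : ℕ) : ℤ) * PQ ((b : ℕ) : ℤ) ≠ 0 :=
    mul_ne_zero (mul_ne_zero (mul_ne_zero (mul_ne_zero (pn _) (pn _)) (pn _)) (pn _)) (pn _)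
  rw [div_add_div _ _ d2 d3, div_add_div _ _ (mul_ne_zero d2 d3) d4,
      div_eq_div_iff d1 (mul_ne_zero (mul_ne_zero d2 d3) d4)]
  -- expand the P's
  rw [Pstep2 (a+b+2), Pstep2 a, Pstep2 b, Pstep2 c, Pstep2 (a+b+c+4),
      Pstep2 (a+c+2), Pstep2 0, Pstep1 c, Pstep1 a, Pstep1 (a+b+c+4), Pstep1 b,
      PQ_zero, hQ_zero]
  -- key reduced identity
  have K : hQ ((a+c+2 : ℕ) : ℤ) * hQ ((a+c+2+1 : ℕ) : ℤ) * hQ ((a+b+2 : ℕ) : ℤ) *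
        hQ ((a+b+2+1 : ℕ) : ℤ) =
      hQ ((a : ℕ) : ℤ) * hQ ((a+1 : ℕ) : ℤ) * hQ ((a+b+c+4 : ℕ) : ℤ) *
        hQ ((a+b+c+4+1 : ℕ) : ℤ) +
      tQ^(2*a+2) * hQ ((0+1 : ℕ) : ℤ) * hQ ((c+1 : ℕ) : ℤ) * hQ ((b+1 : ℕ) : ℤ) *
        hQ ((a+1 : ℕ) : ℤ) * hQ ((a+b+c+4 : ℕ) : ℤ) +
      tQ^(2*a+2) * tQ^(2*a+2) * tQ^2 * tQ^2 * hQ ((c : ℕ) : ℤ) * hQ ((c+1 : ℕ) : ℤ) *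
        hQ ((b : ℕ) : ℤ) * hQ ((b+1 : ℕ) : ℤ) := by
    rw [hcg (a+b+c+4+1) (a+(b+c+4)+1) (by omega), hsplit a (b+c+4),
        hcg (b+c+4) (b+(c+3)+1) (by omega), hsplit b (c+3),
        hcg (a+b+c+4) (a+(b+c+3)+1) (by omega), hsplit a (b+c+3),
        hcg (b+c+3) (b+(c+2)+1) (by omega), hsplit b (c+2),
        hcg (a+b+2+1) (a+(b+2)+1) (by omega), hsplit a (b+2),
        hcg (a+b+2) (a+(b+1)+1) (by omega), hsplit a (b+1),
        hcg (a+c+2+1) (a+(c+2)+1) (by omega), hsplit a (c+2),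
        hcg (a+c+2) (a+(c+1)+1) (by omega), hsplit a (c+1),
        hcg (c+3) (c+2+1) (by omega), hsucc (c+2),
        hsucc (c+1), hsucc (b+1),
        hcg (a+1) (a+0+1) (by omega), hsplit a 0,
        hcg (b+1) (b+0+1) (by omega), hsplit b 0,
        hcg (c+1) (c+0+1) (by omega), hsplit c 0,
        hsucc 0, hQ_zero]
    rw [urel a, urel b, urel c]
    ring
  linear_combination (PQ ((a+b+2 : ℕ) : ℤ) * PQ ((a+b+c+4 : ℕ) : ℤ) *
      (PQ ((c : ℕ) : ℤ) * hQ ((c : ℕ) : ℤ) * hQ ((c+1 : ℕ) : ℤ) * PQ ((a : ℕ) : ℤ) *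
        PQ ((a+c+2 : ℕ) : ℤ) * PQ ((b : ℕ) : ℤ) * hQ ((b : ℕ) : ℤ) * hQ ((b+1 : ℕ) : ℤ)) *
      (PQ ((c : ℕ) : ℤ) * hQ ((c : ℕ) : ℤ) * (PQ ((a : ℕ) : ℤ) * hQ ((a : ℕ) : ℤ)) *
        (PQ ((a+c+2 : ℕ) : ℤ) * hQ ((a+c+2 : ℕ) : ℤ) * hQ ((a+c+2+1 : ℕ) : ℤ)) *
        (PQ ((b : ℕ) : ℤ) * hQ ((b : ℕ) : ℤ))) *
      (hQ ((0+1 : ℕ) : ℤ) * PQ ((c : ℕ) : ℤ) *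
        (PQ ((a : ℕ) : ℤ) * hQ ((a : ℕ) : ℤ) * hQ ((a+1 : ℕ) : ℤ)) *
        (PQ ((a+c+2 : ℕ) : ℤ) * hQ ((a+c+2 : ℕ) : ℤ) * hQ ((a+c+2+1 : ℕ) : ℤ)) *
        PQ ((b : ℕ) : ℤ))) * K
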